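/- Let E : ℝⁿ → ℝ be differentiable with L-Lipschitz gradient, R : ℝⁿ → ℝ ∪ {∞} proper, lsc, convex, and let the sequences (uᵏ, qᵏ) satisfy qᵏ⁺¹ = qᵏ − (1/τᵏ)(uᵏ⁺¹ − uᵏ + τᵏ∇E(uᵏ)) with qᵏ⁺¹ ∈ ∂R(uᵏ⁺¹) and stepsize 0 < τᵏ ≤ 2/(L + 2ρ₁) for some ρ₁ > 0. Then E(uᵏ⁺¹) + D_R^symm(uᵏ⁺¹, uᵏ) + ρ₁‖uᵏ⁺¹ − uᵏ‖² ≤ E(uᵏ) for all k. -/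

import Mathlib

open RealInnerProductSpace Filter Topology

noncomputable def fenchel {n : ℕ} (J : EuclideanSpace ℝ (Fin n) → EReal)
    (p : EuclideanSpace ℝ (Fin n)) : EReal :=
  ⨆ u, ((⟪u, p⟫ : ℝ) : EReal) - J u

def IsSubgradient {n : ℕ} (J : EuclideanSpace ℝ (Fin n) → EReal)
    (u p : EuclideanSpace ℝ (Fin n)) : Prop :=
  ∀ v, J u + ((⟪p, v - u⟫ : ℝ) : EReal) ≤ J v

def ERealConvex {n : ℕ} (J : EuclideanSpace ℝ (Fin n) → EReal) : Prop :=
  ∀ u v : EuclideanSpace ℝ (Fin n), ∀ a b : ℝ, 0 ≤ a → 0 ≤ b → a + b = 1 →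
    J (a • u + b • v) ≤ (a : EReal) * J u + (b : EReal) * J v

section aux
variable {n : ℕ}

lemma descent_lemma {L : ℝ} (E : EuclideanSpace ℝ (Fin n) → ℝ) (hE : Differentiable ℝ E)
    (hLip : ∀ x y, ‖gradient E x - gradient E y‖ ≤ L * ‖x - y‖)
    (x y : EuclideanSpace ℝ (Fin n)) :
    E y ≤ E x + ⟪gradient E x, y - x⟫ + L / 2 * ‖y - x‖ ^ 2 := by
  set δ := y - x with hδ
  have hgc : Continuous (gradient E) := by
    have : LipschitzWith (Real.toNNReal L) (gradient E) := by
      apply LipschitzWith.of_dist_le_mul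
      intro a b
      calc dist (gradient E a) (gradient E b) ≤ L * dist a b := by
            simpa [dist_eq_norm] using hLip a b
        _ ≤ Real.toNNReal L * dist a b := by
            gcongr; exact Real.le_coe_toNNReal L
    exact this.continuous
  have hderiv : ∀ t : ℝ, HasDerivAt (fun t : ℝ => E (x + t • δ))
      (⟪gradient E (x + t • δ), δ⟫) t := by
    intro t
    have hc : HasDerivAt (fun t : ℝ => x + t • δ) δ t := by
      simpa using ((hasDerivAt_id t).smul_const δ).const_add x
    have hf : HasFDerivAt E (InnerProductSpace.toDual ℝ _ (gradient E (x + t • δ)))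
        (x + t • δ) := (hE _).hasGradientAt
    have h := hf.comp_hasDerivAt t hc
    rw [InnerProductSpace.toDual_apply_apply] at h
    exact h
  have hcont : Continuous (fun t : ℝ => (⟪gradient E (x + t • δ), δ⟫ : ℝ)) := by
    exact (hgc.comp (by continuity)).inner continuous_const
  have hint : ∫ t in (0:ℝ)..1, (⟪gradient E (x + t • δ), δ⟫ : ℝ)
      = E y - E x := by
    have := intervalIntegral.integral_eq_sub_of_hasDerivAt
      (f := fun t : ℝ => E (x + t • δ))
      (f' := fun t : ℝ => (⟪gradient E (x + t • δ), δ⟫ : ℝ))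
      (fun t _ => hderiv t) (hcont.intervalIntegrable 0 1)
    simpa [hδ] using this
  have hbound : ∫ t in (0:ℝ)..1, (⟪gradient E (x + t • δ), δ⟫ : ℝ)
      ≤ ⟪gradient E x, δ⟫ + L / 2 * ‖δ‖ ^ 2 := by
    have h1 : ∀ t ∈ Set.Icc (0:ℝ) 1,
        (⟪gradient E (x + t • δ), δ⟫ : ℝ) ≤ ⟪gradient E x, δ⟫ + L * t * ‖δ‖ ^ 2 := by
      intro t ht
      have : (⟪gradient E (x + t • δ) - gradient E x, δ⟫ : ℝ) ≤ L * t * ‖δ‖ ^ 2 := by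
        calc (⟪gradient E (x + t • δ) - gradient E x, δ⟫ : ℝ)
            ≤ ‖gradient E (x + t • δ) - gradient E x‖ * ‖δ‖ := real_inner_le_norm _ _
          _ ≤ (L * ‖(x + t • δ) - x‖) * ‖δ‖ := by
              have := hLip (x + t • δ) x
              nlinarith [norm_nonneg δ]
          _ = L * t * ‖δ‖ ^ 2 := by
              have : ‖(x + t • δ) - x‖ = t * ‖δ‖ := by
                simp [norm_smul, abs_of_nonneg ht.1]
              rw [this]; ring
      have h2 : (⟪gradient E (x + t • δ), δ⟫ : ℝ)
          = ⟪gradient E x, δ⟫ + ⟪gradient E (x + t • δ) - gradient E x, δ⟫ := by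
        rw [inner_sub_left]; ring
      linarith
    have h3 : ∫ t in (0:ℝ)..1, (⟪gradient E (x + t • δ), δ⟫ : ℝ)
        ≤ ∫ t in (0:ℝ)..1, (⟪gradient E x, δ⟫ + L * t * ‖δ‖ ^ 2) := by
      apply intervalIntegral.integral_mono_on zero_le_one
        (hcont.intervalIntegrable 0 1)
        ((by fun_prop : Continuous fun t : ℝ => (⟪gradient E x, δ⟫ + L * t * ‖δ‖ ^ 2)).intervalIntegrable 0 1)
        h1
    have h4 : ∫ t in (0:ℝ)..1, (⟪gradient E x, δ⟫ + L * t * ‖δ‖ ^ 2)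
        = ⟪gradient E x, δ⟫ + L / 2 * ‖δ‖ ^ 2 := by
      have h5 : ∫ t in (0:ℝ)..1, L * t * ‖δ‖ ^ 2 = L / 2 * ‖δ‖ ^ 2 := by
        have he : (fun t : ℝ => L * t * ‖δ‖ ^ 2) = fun t : ℝ => (L * ‖δ‖ ^ 2) * t := by
          funext t; ring
        rw [he, intervalIntegral.integral_const_mul, integral_id]; ring
      rw [intervalIntegral.integral_add intervalIntegrable_const
        ((by fun_prop : Continuous fun t : ℝ => L * t * ‖δ‖ ^ 2).intervalIntegrable 0 1), h5,
        intervalIntegral.integral_const]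
      simp
    linarith
  linarith [hint ▸ hbound]

end aux

/-- Sufficient decrease property of the linearised Bregman iteration. -/
theorem sufficient_decrease {n : ℕ} (L ρ₁ : ℝ) (hρ₁ : 0 < ρ₁)
    (E : EuclideanSpace ℝ (Fin n) → ℝ) (hE : Differentiable ℝ E)
    (hLip : ∀ x y, ‖gradient E x - gradient E y‖ ≤ L * ‖x - y‖)
    (R : EuclideanSpace ℝ (Fin n) → EReal)
    (hproper₁ : ∀ x, R x ≠ ⊥) (hproper₂ : ∃ x, R x ≠ ⊤)
    (hlsc : LowerSemicontinuous R) (hconv : ERealConvex R)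
    (u q : ℕ → EuclideanSpace ℝ (Fin n)) (τ : ℕ → ℝ)
    (hstep : ∀ k, 0 < τ k ∧ τ k ≤ 2 / (L + 2 * ρ₁))
    (hsub : ∀ k, IsSubgradient R (u k) (q k))
    (hupd : ∀ k, q (k + 1) = q k - (1 / τ k) • (u (k + 1) - u k + τ k • gradient E (u k))) :
    ∀ k, E (u (k + 1)) + ⟪q (k + 1) - q k, u (k + 1) - u k⟫
        + ρ₁ * ‖u (k + 1) - u k‖ ^ 2 ≤ E (u k) := by
  intro k
  obtain ⟨hτpos, hτle⟩ := hstep k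
  have hτne : τ k ≠ 0 := ne_of_gt hτpos
  have hc : 0 < L + 2 * ρ₁ := by
    by_contra h
    push_neg at h
    have : 2 / (L + 2 * ρ₁) ≤ 0 := div_nonpos_of_nonneg_of_nonpos (by norm_num) h
    linarith
  have hτinv : (L + 2 * ρ₁) / 2 ≤ 1 / τ k := by
    have := one_div_le_one_div_of_le hτpos hτle
    rwa [one_div_div] at this
  have hin : ⟪q (k + 1) - q k, u (k + 1) - u k⟫
      = -(1 / τ k) * ‖u (k + 1) - u k‖ ^ 2 - ⟪gradient E (u k), u (k + 1) - u k⟫ := by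
    have h1 : q (k + 1) - q k
        = -((1 / τ k) • (u (k + 1) - u k + τ k • gradient E (u k))) := by
      rw [hupd k]; abel
    rw [h1, inner_neg_left, real_inner_smul_left, inner_add_left, real_inner_smul_left,
      real_inner_self_eq_norm_sq]
    field_simp
    ring
  have hdesc := descent_lemma E hE hLip (u k) (u (k + 1))
  have hds : u (k + 1) - u k = u (k + 1) - u k := rfl
  rw [hin]
  nlinarith [sq_nonneg ‖u (k + 1) - u k‖, hdesc, hτinv]
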